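/- Let δ ∈ (0,1) and c(δ,T) > 0. If a system is δ-null controllable on [0,T] with cost c(δ,T) (i.e., for every x₀ there is a control u with ‖u‖² ≤ c(δ,T)²|x₀|² and terminal error E|x(T)|² ≤ δ|x₀|²), then applying the duality identity E⟨x(T), y₁⟩ - ⟨x₀, y(0)⟩ = ⟨u, z⟩_{L²} and Cauchy–Schwarz yields, for every terminal datum y₁ of the dual BSDE: E|y(0;y₁)|² ≤ c(δ,T)(1 + 2(1-δ)⁻¹) ‖z(·;y₁)‖²_{L²} + ((1+δ)/2) E|y₁|². Abstract version: let H, K, W be real Hilbert spaces, let v ∈ H, w ∈ K, β ≥ 0 be given, and suppose for every x ∈ H there exists u ∈ W with ‖u‖_W ≤ γ‖x‖_H and |⟨x, v⟩_H| ≤ ‖u‖_W · ‖w‖_K + √δ · β · ‖x‖_H. Then ‖v‖²_H ≤ γ²(1 + 2(1-δ)⁻¹)‖w‖²_K + ((1+δ)/2) β². -/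
import Mathlib


open RealInnerProductSpace

theorem stmt_17 {H K W : Type*} [NormedAddCommGroup H] [InnerProductSpace ℝ H]
    [NormedAddCommGroup K] [InnerProductSpace ℝ K]
    [NormedAddCommGroup W] [InnerProductSpace ℝ W]
    (v : H) (w : K) (β γ δ : ℝ) (hβ : 0 ≤ β) (hγ : 0 ≤ γ)
    (hδ : δ ∈ Set.Ioo (0 : ℝ) 1)
    (h : ∀ x : H, ∃ u : W, ‖u‖ ≤ γ * ‖x‖ ∧
      |⟪x, v⟫| ≤ ‖u‖ * ‖w‖ + Real.sqrt δ * β * ‖x‖) :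
    ‖v‖ ^ 2 ≤ γ ^ 2 * (1 + 2 * (1 - δ)⁻¹) * ‖w‖ ^ 2 + ((1 + δ) / 2) * β ^ 2 := by
  obtain ⟨hδ0, hδ1⟩ := hδ
  obtain ⟨u, hu, hineq⟩ := h v
  have hs : Real.sqrt δ ^ 2 = δ := Real.sq_sqrt hδ0.le
  have hs0 : 0 ≤ Real.sqrt δ := Real.sqrt_nonneg δ
  have hvv : ‖v‖ ^ 2 ≤ |⟪v, v⟫| := by
    rw [real_inner_self_eq_norm_sq]
    exact le_abs_self _
  have key : ‖v‖ ^ 2 ≤ (γ * ‖w‖ + Real.sqrt δ * β) * ‖v‖ := by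
    calc ‖v‖ ^ 2 ≤ |⟪v, v⟫| := hvv
      _ ≤ ‖u‖ * ‖w‖ + Real.sqrt δ * β * ‖v‖ := hineq
      _ ≤ (γ * ‖v‖) * ‖w‖ + Real.sqrt δ * β * ‖v‖ := by
          gcongr
      _ = (γ * ‖w‖ + Real.sqrt δ * β) * ‖v‖ := by ring
  have hv1 : ‖v‖ ≤ γ * ‖w‖ + Real.sqrt δ * β := by
    rcases eq_or_lt_of_le (norm_nonneg v) with h0 | h0
    · rw [← h0]
      positivity
    · have := key
      nlinarith
  have hε : (0:ℝ) < 1 - δ := by linarith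
  have hεinv : (1 - δ) * (1 - δ)⁻¹ = 1 := mul_inv_cancel₀ hε.ne'
  have hεinv0 : 0 ≤ (1 - δ)⁻¹ := by positivity
  have hsq : ‖v‖ ^ 2 ≤ (γ * ‖w‖ + Real.sqrt δ * β) ^ 2 := by
    nlinarith [norm_nonneg v, norm_nonneg w]
  set r := Real.sqrt (2 * (1 - δ)⁻¹) with hr
  set q := Real.sqrt ((1 - δ) / 2) with hq
  have hr2 : r ^ 2 = 2 * (1 - δ)⁻¹ := Real.sq_sqrt (by positivity)
  have hq2 : q ^ 2 = (1 - δ) / 2 := Real.sq_sqrt (by positivity)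
  have hrq : r * q = 1 := by
    rw [hr, hq, ← Real.sqrt_mul (by positivity)]
    have : 2 * (1 - δ)⁻¹ * ((1 - δ) / 2) = 1 := by
      field_simp
    rw [this, Real.sqrt_one]
  have hs1 : Real.sqrt δ ≤ 1 := Real.sqrt_le_one.mpr hδ1.le
  have hab : 0 ≤ γ * ‖w‖ * β := by positivity
  nlinarith [sq_nonneg (r * (γ * ‖w‖) - q * β), sq_nonneg β, sq_nonneg (γ * ‖w‖)]
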